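/- In the Clifford algebra Cl, define for each n ∈ ℤ the elements φ⁻(n) = −(n/√2)·(Φ_1(n−1/2) + √−1·Φ_2(n−1/2)) and φ⁺(n) = −√2·(n·Φ_1(n+1/2) + √−1·(n+1)·Φ_2(n+1/2)). Then for all m, n ∈ ℤ the following anticommutation relations hold in Cl: φ⁺(m)φ⁺(n) + φ⁺(n)φ⁺(m) = 0, φ⁻(m)φ⁻(n) + φ⁻(n)φ⁻(m) = 0, and φ⁺(n)φ⁻(m) + φ⁻(m)φ⁺(n) = n·δ_{n+m,0}·1. -/

import Mathlib

/-!
`Cl` is (an algebra satisfying the defining relations of) the Clifford algebra over `ℂ`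
with generators `Φ i r` for `i ∈ {1,2}` (encoded by `Fin 2`) and half-integers
`r ∈ ℤ + 1/2` (encoded as rationals of the form `a + 1/2`, `a : ℤ`), subject to
`Φ i r * Φ j s + Φ j s * Φ i r = δ_{i,j} δ_{r+s,0}`.
-/

lemma bilin_anticomm {Cl : Type*} [Ring Cl] [Algebra ℂ Cl]
    (x1 x2 y1 y2 : Cl) (c1 c2 d1 d2 e11 e12 e21 e22 : ℂ)
    (h11 : x1 * y1 + y1 * x1 = e11 • 1)
    (h12 : x1 * y2 + y2 * x1 = e12 • 1)
    (h21 : x2 * y1 + y1 * x2 = e21 • 1)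
    (h22 : x2 * y2 + y2 * x2 = e22 • 1) :
    (c1 • x1 + c2 • x2) * (d1 • y1 + d2 • y2)
      + (d1 • y1 + d2 • y2) * (c1 • x1 + c2 • x2)
    = (c1 * d1 * e11 + c1 * d2 * e12 + c2 * d1 * e21 + c2 * d2 * e22) • 1 := by
  have key : (c1 • x1 + c2 • x2) * (d1 • y1 + d2 • y2)
      + (d1 • y1 + d2 • y2) * (c1 • x1 + c2 • x2)
    = (c1 * d1) • (x1 * y1 + y1 * x1) + (c1 * d2) • (x1 * y2 + y2 * x1)
      + (c2 * d1) • (x2 * y1 + y1 * x2) + (c2 * d2) • (x2 * y2 + y2 * x2) := by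
    simp only [mul_add, add_mul, smul_mul_assoc, mul_smul_comm, smul_add, smul_smul]
    module
  rw [key, h11, h12, h21, h22]
  simp only [smul_smul]
  module

/-- `φ⁻(n) = −(n/√2)·(Φ_1(n−1/2) + √−1·Φ_2(n−1/2))`. -/
noncomputable def phiMinus (Cl : Type*) [Ring Cl] [Algebra ℂ Cl]
    (Φ : Fin 2 → ℚ → Cl) (n : ℤ) : Cl :=
  (-((n : ℂ) / (Real.sqrt 2 : ℂ))) •
    (Φ 0 ((n : ℚ) - 1/2) + Complex.I • Φ 1 ((n : ℚ) - 1/2))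

/-- `φ⁺(n) = −√2·(n·Φ_1(n+1/2) + √−1·(n+1)·Φ_2(n+1/2))`. -/
noncomputable def phiPlus (Cl : Type*) [Ring Cl] [Algebra ℂ Cl]
    (Φ : Fin 2 → ℚ → Cl) (n : ℤ) : Cl :=
  (-(Real.sqrt 2 : ℂ)) •
    ((n : ℂ) • Φ 0 ((n : ℚ) + 1/2) + Complex.I • (((n : ℂ) + 1) • Φ 1 ((n : ℚ) + 1/2)))

theorem phi_anticommutation_relations
    (Cl : Type*) [Ring Cl] [Algebra ℂ Cl] (Φ : Fin 2 → ℚ → Cl)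
    (hrel : ∀ (i j : Fin 2) (a b : ℤ),
      Φ i ((a : ℚ) + 1/2) * Φ j ((b : ℚ) + 1/2)
        + Φ j ((b : ℚ) + 1/2) * Φ i ((a : ℚ) + 1/2)
        = if i = j ∧ ((a : ℚ) + 1/2) + ((b : ℚ) + 1/2) = 0 then 1 else 0) :
    ∀ m n : ℤ,
      phiPlus Cl Φ m * phiPlus Cl Φ n + phiPlus Cl Φ n * phiPlus Cl Φ m = 0 ∧
      phiMinus Cl Φ m * phiMinus Cl Φ n + phiMinus Cl Φ n * phiMinus Cl Φ m = 0 ∧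
      phiPlus Cl Φ n * phiMinus Cl Φ m + phiMinus Cl Φ m * phiPlus Cl Φ n
        = (if n + m = 0 then (n : ℂ) else 0) • (1 : Cl) := by
  have hs2 : (Real.sqrt 2 : ℂ) * (Real.sqrt 2 : ℂ) = 2 := by
    rw [← Complex.ofReal_mul]
    norm_num [Real.mul_self_sqrt]
  have hsne : (Real.sqrt 2 : ℂ) ≠ 0 := by
    intro h
    rw [h, mul_zero] at hs2
    norm_num at hs2
  have key : ∀ (i j : Fin 2) (a b : ℤ),
      Φ i ((a : ℚ) + 1/2) * Φ j ((b : ℚ) + 1/2)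
        + Φ j ((b : ℚ) + 1/2) * Φ i ((a : ℚ) + 1/2)
      = (if i = j ∧ a + b + 1 = 0 then (1 : ℂ) else 0) • (1 : Cl) := by
    intro i j a b
    have hq : (((a : ℚ) + 1/2) + ((b : ℚ) + 1/2) = 0) ↔ (a + b + 1 = 0) := by
      rw [show ((a : ℚ) + 1/2) + ((b : ℚ) + 1/2) = ((a + b + 1 : ℤ) : ℚ) by
        push_cast; ring]
      exact_mod_cast Int.cast_eq_zero
    rw [hrel]
    simp only [hq]
    split_ifs <;> simp
  have hp : ∀ k : ℤ, phiPlus Cl Φ k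
      = (-(Real.sqrt 2 : ℂ) * (k : ℂ)) • Φ 0 ((k : ℚ) + 1/2)
        + (-(Real.sqrt 2 : ℂ) * (Complex.I * ((k : ℂ) + 1))) • Φ 1 ((k : ℚ) + 1/2) := by
    intro k
    simp only [phiPlus, smul_add, smul_smul]
  have hm : ∀ k : ℤ, phiMinus Cl Φ k
      = (-((k : ℂ) / (Real.sqrt 2 : ℂ))) • Φ 0 (((k - 1 : ℤ) : ℚ) + 1/2)
        + (-((k : ℂ) / (Real.sqrt 2 : ℂ)) * Complex.I) • Φ 1 (((k - 1 : ℤ) : ℚ) + 1/2) := by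
    intro k
    have : ((k - 1 : ℤ) : ℚ) + 1/2 = (k : ℚ) - 1/2 := by push_cast; ring
    simp only [phiMinus, smul_add, smul_smul, this]
  intro m n
  refine ⟨?_, ?_, ?_⟩
  · rw [hp m, hp n,
      bilin_anticomm _ _ _ _ _ _ _ _ _ _ _ _
        (key 0 0 m n) (key 0 1 m n) (key 1 0 m n) (key 1 1 m n)]
    simp only [show (0 : Fin 2) ≠ 1 by decide, show (1 : Fin 2) ≠ 0 by decide,
      false_and, if_false, mul_zero, add_zero, zero_add]
    by_cases h : m + n + 1 = 0
    · have hn : (n : ℂ) = -(m : ℂ) - 1 := by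
        have : n = -m - 1 := by omega
        rw [this]; push_cast; ring
      rw [if_pos (⟨trivial, h⟩ : True ∧ m + n + 1 = 0)]
      simp only [mul_one, hn]
      rw [show (0 : Cl) = (0 : ℂ) • (1 : Cl) by simp]
      congr 1
      ring_nf
      rw [Complex.I_sq]
      ring
    · simp [h]
  · rw [hm m, hm n,
      bilin_anticomm _ _ _ _ _ _ _ _ _ _ _ _
        (key 0 0 (m-1) (n-1)) (key 0 1 (m-1) (n-1)) (key 1 0 (m-1) (n-1)) (key 1 1 (m-1) (n-1))]
    simp only [show (0 : Fin 2) ≠ 1 by decide, show (1 : Fin 2) ≠ 0 by decide,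
      false_and, if_false, mul_zero, add_zero, zero_add]
    by_cases h : m - 1 + (n - 1) + 1 = 0
    · rw [if_pos (⟨trivial, h⟩ : True ∧ m - 1 + (n - 1) + 1 = 0)]
      simp only [mul_one]
      rw [show (0 : Cl) = (0 : ℂ) • (1 : Cl) by simp]
      congr 1
      ring_nf
      rw [Complex.I_sq]
      ring
    · simp [h]
  · rw [hp n, hm m,
      bilin_anticomm _ _ _ _ _ _ _ _ _ _ _ _
        (key 0 0 n (m-1)) (key 0 1 n (m-1)) (key 1 0 n (m-1)) (key 1 1 n (m-1))]
    simp only [show (0 : Fin 2) ≠ 1 by decide, show (1 : Fin 2) ≠ 0 by decide,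
      false_and, if_false, mul_zero, add_zero, zero_add]
    by_cases h : n + m = 0
    · have h' : n + (m - 1) + 1 = 0 := by omega
      rw [if_pos (⟨trivial, h'⟩ : True ∧ n + (m - 1) + 1 = 0), if_pos h]
      simp only [mul_one]
      congr 1
      have hm' : (m : ℂ) = -(n : ℂ) := by
        have : m = -n := by omega
        rw [this]; push_cast; ring
      field_simp [hm']
      ring_nf
      rw [Complex.I_sq]
      ring_nf
      linear_combination -hm'
    · have h' : ¬ (n + (m - 1) + 1 = 0) := by omega
      simp [h, h']
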